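/- A finite graph is chordal if and only if it has a perfect elimination ordering, i.e., an ordering v₁ ≺ ⋯ ≺ v_n of the vertices such that for all i < j < k, if v_i is adjacent to both v_j and v_k then v_j is adjacent to v_k. -/

import Mathlib

open scoped BigOperators

/-- A graph is chordal if every cycle of length at least four has a chord. -/
def IsChordal {V : Type*} (Γ : SimpleGraph V) : Prop :=
  ∀ ⦃v : V⦄ (w : Γ.Walk v v), w.IsCycle → 4 ≤ w.length →
    ∃ i j : ℕ, i + 2 ≤ j ∧ j < w.length ∧ ¬(i = 0 ∧ j + 1 = w.length) ∧
      Γ.Adj (w.getVert i) (w.getVert j)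

namespace ChordalAux

open SimpleGraph Walk

variable {V : Type*} {G : SimpleGraph V}

lemma support_getElem {u v : V} (p : G.Walk u v) (i : ℕ) (hi : i < p.support.length) :
    p.support[i] = p.getVert i := by
  induction p generalizing i with
  | nil =>
    simp only [Walk.support_nil, List.length_cons, List.length_nil] at hi
    have : i = 0 := by omega
    subst this; simp
  | cons h p ih =>
    cases i with
    | zero => simp
    | succ n =>
      simp only [Walk.support_cons, Walk.getVert_cons_succ, List.getElem_cons_succ]
      exact ih n (by simpa using hi)

lemma tail_support_getElem {u v : V} (p : G.Walk u v) (k : ℕ)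
    (hk : k < p.support.tail.length) :
    p.support.tail[k] = p.getVert (k + 1) := by
  rw [List.getElem_tail, support_getElem]

lemma IsPath.getVert_injOn' {u v : V} {p : G.Walk u v} (hp : p.IsPath) {i j : ℕ}
    (hi : i ≤ p.length) (hj : j ≤ p.length) (hij : i ≠ j) :
    p.getVert i ≠ p.getVert j := by
  have hl : p.support.length = p.length + 1 := by simp [SimpleGraph.Walk.length_support]
  intro heq
  rw [← support_getElem p i (by omega), ← support_getElem p j (by omega)] at heq
  exact hij (hp.support_nodup.getElem_inj_iff.mp heq)

lemma IsCycle.getVert_injOn' {v : V} {c : G.Walk v v} (hc : c.IsCycle) {i j : ℕ}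
    (hij : i < j) (hj : j < c.length) : c.getVert i ≠ c.getVert j := by
  have hn : c.support.tail.Nodup := hc.2
  have hl : c.support.tail.length = c.length := by simp [SimpleGraph.Walk.length_support]
  have key : ∀ a b : ℕ, 1 ≤ a → a < b → b ≤ c.length → c.getVert a ≠ c.getVert b := by
    intro a b ha hab hb heq
    have h1 : c.support.tail[a-1]'(by omega) = c.getVert a := by
      rw [tail_support_getElem]; congr 1; omega
    have h2 : c.support.tail[b-1]'(by omega) = c.getVert b := by
      rw [tail_support_getElem]; congr 1; omega
    have : a - 1 = b - 1 := hn.getElem_inj_iff.mp (by rw [h1, h2, heq])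
    omega
  rcases Nat.eq_zero_or_pos i with rfl | hip
  · intro hcon
    have h3 := hc.three_le_length
    have h0 : c.getVert 0 = c.getVert c.length := by simp
    exact key j c.length (by omega) hj le_rfl (by rw [← hcon, ← h0])
  · exact key i j hip hij (by omega)

/-- Take the first `n` steps of a walk (existence form). -/
lemma exists_take {x y : V} (p : G.Walk x y) (n : ℕ) (hn : n ≤ p.length) :
    ∃ q : G.Walk x (p.getVert n), q.length = n ∧ q.support ⊆ p.support := by
  induction p generalizing n with
  | nil =>
    simp only [Walk.length_nil, Nat.le_zero] at hn
    subst hn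
    exact ⟨Walk.nil.copy rfl (by simp), by simp, by simp⟩
  | cons h p ih =>
    cases n with
    | zero => exact ⟨Walk.nil.copy rfl (by simp), by simp, by simp⟩
    | succ m =>
      obtain ⟨q, hq1, hq2⟩ := ih m (by simpa using hn)
      refine ⟨(q.cons h).copy rfl (by rw [Walk.getVert_cons_succ]), by simp [hq1], ?_⟩
      intro z hz
      simp only [Walk.support_copy, Walk.support_cons, List.mem_cons] at hz
      rcases hz with rfl | hz
      · simp
      · simp only [Walk.support_cons, List.mem_cons]
        exact Or.inr (hq2 hz)

/-- Drop the first `n` steps of a walk (existence form). -/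
lemma exists_drop {x y : V} (p : G.Walk x y) (n : ℕ) (hn : n ≤ p.length) :
    ∃ q : G.Walk (p.getVert n) y, q.length = p.length - n ∧ q.support ⊆ p.support := by
  induction p generalizing n with
  | nil =>
    simp only [Walk.length_nil, Nat.le_zero] at hn
    subst hn
    exact ⟨Walk.nil.copy (by simp) rfl, by simp, by simp⟩
  | cons h p ih =>
    cases n with
    | zero =>
      exact ⟨(p.cons h).copy (by simp) rfl, by simp, by simp⟩
    | succ m =>
      obtain ⟨q, hq1, hq2⟩ := ih m (by simpa using hn)
      refine ⟨q.copy (by rw [Walk.getVert_cons_succ]) rfl, by simp [hq1], ?_⟩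
      intro z hz
      simp only [Walk.support_copy] at hz
      simp only [Walk.support_cons, List.mem_cons]
      exact Or.inr (hq2 hz)

/-- Shortcut a walk through a chord. -/
lemma exists_shortcut {x y : V} (p : G.Walk x y) {i j : ℕ} (hij : i ≤ j) (hj : j ≤ p.length)
    (hadj : G.Adj (p.getVert i) (p.getVert j)) :
    ∃ q : G.Walk x y, q.length = i + 1 + (p.length - j) ∧ q.support ⊆ p.support := by
  obtain ⟨q1, hl1, hs1⟩ := exists_take p i (le_trans hij hj)
  obtain ⟨q2, hl2, hs2⟩ := exists_drop p j hj
  refine ⟨q1.append (Walk.cons hadj q2), by simp [hl1, hl2]; omega, ?_⟩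
  intro z hz
  rw [Walk.mem_support_append_iff] at hz
  rcases hz with hz | hz
  · exact hs1 hz
  · simp only [Walk.support_cons, List.mem_cons] at hz
    rcases hz with rfl | hz
    · exact Walk.mem_support_iff_exists_getVert.mpr ⟨i, rfl, le_trans hij hj⟩
    · exact hs2 hz


lemma getVert_map {W : Type*} {G' : SimpleGraph W} (f : G →g G') {u v : V}
    (p : G.Walk u v) (i : ℕ) : (p.map f).getVert i = f (p.getVert i) := by
  induction p generalizing i with
  | nil => rw [Walk.map_nil, Walk.getVert_of_length_le _ (by simp), Walk.getVert_of_length_le _ (by simp)]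
  | cons h p ih =>
    cases i with
    | zero => simp
    | succ n => simpa using ih n

lemma IsChordal.induce (h : IsChordal G) (s : Set V) : IsChordal (G.induce s) := by
  intro v w hw hlen
  set emb : G.induce s ↪g G := SimpleGraph.Embedding.induce s with hemb
  set f : G.induce s →g G := emb.toHom with hf
  have hinj : Function.Injective f := emb.injective
  have hcyc : (w.map f).IsCycle := hw.map hinj
  obtain ⟨i, j, h1, h2, h3, h4⟩ := h (w.map f) hcyc (by rwa [Walk.length_map])
  rw [Walk.length_map] at h2 h3
  rw [getVert_map, getVert_map] at h4
  refine ⟨i, j, h1, h2, h3, ?_⟩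
  simpa [hf, hemb] using h4

/-- Reachability within a set of allowed vertices. -/
def ReachIn (G : SimpleGraph V) (s : Set V) (a b : V) : Prop :=
  ∃ w : G.Walk a b, ∀ v ∈ w.support, v ∈ s

lemma ReachIn.refl {s : Set V} {a : V} (ha : a ∈ s) : ReachIn G s a a :=
  ⟨Walk.nil, by simpa using ha⟩

lemma ReachIn.mem_left {s : Set V} {a b : V} (h : ReachIn G s a b) : a ∈ s := by
  obtain ⟨w, hw⟩ := h; exact hw a w.start_mem_support

lemma ReachIn.mem_right {s : Set V} {a b : V} (h : ReachIn G s a b) : b ∈ s := by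
  obtain ⟨w, hw⟩ := h; exact hw b w.end_mem_support

lemma ReachIn.symm {s : Set V} {a b : V} (h : ReachIn G s a b) : ReachIn G s b a := by
  obtain ⟨w, hw⟩ := h
  exact ⟨w.reverse, fun v hv => hw v (by simpa [Walk.support_reverse] using hv)⟩

lemma ReachIn.trans {s : Set V} {a b c : V} (h1 : ReachIn G s a b) (h2 : ReachIn G s b c) :
    ReachIn G s a c := by
  obtain ⟨w1, hw1⟩ := h1; obtain ⟨w2, hw2⟩ := h2
  refine ⟨w1.append w2, fun v hv => ?_⟩
  rw [Walk.mem_support_append_iff] at hv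
  exact hv.elim (hw1 v) (hw2 v)

lemma ReachIn.adj {s : Set V} {a b : V} (hab : G.Adj a b) (ha : a ∈ s) (hb : b ∈ s) :
    ReachIn G s a b :=
  ⟨hab.toWalk, by simp [ha, hb]⟩

lemma ReachIn.of_mem_support {s : Set V} {a b c : V} (h : ReachIn G s a b)
    (w : G.Walk a b) (hw : ∀ v ∈ w.support, v ∈ s) (hc : c ∈ w.support) :
    ReachIn G s a c := by
  classical
  exact ⟨w.takeUntil c hc, fun v hv => hw v (Walk.support_takeUntil_subset w hc hv)⟩


/-- `S` separates `a` from `b`. -/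
def Sep (G : SimpleGraph V) (a b : V) (S : Finset V) : Prop :=
  a ∉ S ∧ b ∉ S ∧ ¬ ReachIn G ((↑S : Set V)ᶜ) a b

lemma Sep.symm {a b : V} {S : Finset V} (h : Sep G a b S) : Sep G b a S :=
  ⟨h.2.1, h.1, fun hr => h.2.2 hr.symm⟩

lemma sep_univ_sdiff [Fintype V] [DecidableEq V] {a b : V} (hab : a ≠ b) (hnadj : ¬ G.Adj a b) :
    Sep G a b (Finset.univ \ {a, b}) := by
  refine ⟨by simp, by simp [hab.symm], ?_⟩
  rintro ⟨w, hw⟩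
  have hlen : 0 < w.length := by
    rcases Nat.eq_zero_or_pos w.length with h0 | h
    · exact absurd (by have := w.getVert_of_length_le (i := 0) (by omega); simpa using this) hab
    · exact h
  have h1 : G.Adj a (w.getVert 1) := by simpa using w.adj_getVert_succ (i := 0) hlen
  have hmem : w.getVert 1 ∈ ((↑(Finset.univ \ ({a, b} : Finset V)) : Set V)ᶜ) :=
    hw _ (Walk.mem_support_iff_exists_getVert.mpr ⟨1, rfl, by omega⟩)
  have : w.getVert 1 = a ∨ w.getVert 1 = b := by
    by_contra hcon
    push_neg at hcon
    exact hmem (by simp [hcon.1, hcon.2])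
  rcases this with h | h
  · exact G.irrefl (h ▸ h1)
  · exact hnadj (h ▸ h1)

lemma exists_min_sep [Fintype V] [DecidableEq V] {a b : V} (hab : a ≠ b)
    (hnadj : ¬ G.Adj a b) :
    ∃ S : Finset V, Sep G a b S ∧ ∀ s ∈ S, ¬ Sep G a b (S.erase s) := by
  classical
  let seps : Finset (Finset V) := Finset.univ.filter (fun S => Sep G a b S)
  have hne : seps.Nonempty :=
    ⟨Finset.univ \ {a, b}, by simp only [seps, Finset.mem_filter, Finset.mem_univ, true_and]
                              exact sep_univ_sdiff hab hnadj⟩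
  obtain ⟨S, hS, hmin⟩ := Finset.exists_min_image seps Finset.card hne
  simp only [seps, Finset.mem_filter, Finset.mem_univ, true_and] at hS hmin
  refine ⟨S, hS, fun s hs hsep => ?_⟩
  have := hmin _ hsep
  have := Finset.card_erase_lt_of_mem hs
  omega

lemma exists_neighbor_in_component [DecidableEq V] {a b : V} {S : Finset V}
    (hsep : Sep G a b S) (hmin : ∀ s ∈ S, ¬ Sep G a b (S.erase s)) {s : V} (hs : s ∈ S) :
    ∃ u, G.Adj s u ∧ ReachIn G ((↑S : Set V)ᶜ) a u := by
  have hne : ¬ Sep G a b (S.erase s) := hmin s hs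
  have ha : a ∉ S.erase s := fun h => hsep.1 (Finset.mem_of_mem_erase h)
  have hb : b ∉ S.erase s := fun h => hsep.2.1 (Finset.mem_of_mem_erase h)
  have hreach : ReachIn G ((↑(S.erase s) : Set V)ᶜ) a b := by
    by_contra h
    exact hne ⟨ha, hb, h⟩
  obtain ⟨w, hw⟩ := hreach
  have hsmem : s ∈ w.support := by
    by_contra hcon
    refine hsep.2.2 ⟨w, fun v hv => ?_⟩
    have h1 : v ∉ (↑(S.erase s) : Set V) := hw v hv
    intro hvS
    refine h1 ?_
    simp only [Finset.coe_erase, Set.mem_diff, Finset.mem_coe, Set.mem_singleton_iff]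
    exact ⟨hvS, fun (h : v = s) => hcon (h ▸ hv)⟩
  set w1 := w.takeUntil s hsmem with hw1
  have hcount : w1.support.count s = 1 := w.count_support_takeUntil_eq_one hsmem
  set w2 := w1.reverse with hw2defn
  have hw2nil : ¬ w2.Nil := by
    rw [Walk.not_nil_iff_lt_length]
    rcases Nat.eq_zero_or_pos w2.length with h0 | h
    · exfalso
      have : s = a := by
        have := w2.getVert_of_length_le (i := 0) (by omega)
        simpa using this
      exact hsep.1 (this ▸ hs)
    · exact h
  have hadj : G.Adj s (w2.getVert 1) := w2.adj_snd hw2nil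
  have hw2eq : Walk.cons (w2.adj_snd hw2nil) w2.tail = w2 := w2.cons_tail_eq hw2nil
  have hsupp2 : w2.support = s :: w2.tail.support := by
    conv_lhs => rw [← hw2eq]
    simp
  have hs_not_tail : s ∉ w2.tail.support := by
    have h1 : w2.support.count s = w1.support.count s := by
      rw [hw2defn, Walk.support_reverse, List.count_reverse]
    rw [hsupp2, hcount] at h1
    simp only [List.count_cons_self] at h1
    exact List.count_eq_zero.mp (by omega)
  have htail_sub : ∀ v ∈ w2.tail.support, v ∈ ((↑S : Set V)ᶜ) := by
    intro v hv
    have hv2 : v ∈ w2.support := by rw [hsupp2]; exact List.mem_cons_of_mem _ hv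
    have hv1 : v ∈ w1.support := by rwa [hw2defn, Walk.support_reverse, List.mem_reverse] at hv2
    have hvw : v ∈ w.support := Walk.support_takeUntil_subset w hsmem hv1
    have hvne : v ≠ s := fun h => hs_not_tail (h ▸ hv)
    have := hw v hvw
    simp only [Set.mem_compl_iff, Finset.coe_erase, Set.mem_diff] at this ⊢
    intro hvS
    exact this ⟨by simpa using hvS, by simpa using hvne⟩
  refine ⟨w2.getVert 1, hadj, w2.tail.reverse, fun v hv => ?_⟩
  rw [Walk.support_reverse, List.mem_reverse] at hv
  exact htail_sub v hv
lemma ReachIn.mono {s t : Set V} (hst : s ⊆ t) {a b : V} (h : ReachIn G s a b) :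
    ReachIn G t a b := by
  obtain ⟨w, hw⟩ := h
  exact ⟨w, fun v hv => hst (hw v hv)⟩

lemma sep_isClique [Fintype V] [DecidableEq V] (hch : IsChordal G) {a b : V} {S : Finset V}
    (hsep : Sep G a b S) (hmin : ∀ s ∈ S, ¬ Sep G a b (S.erase s)) {x y : V}
    (hx : x ∈ S) (hy : y ∈ S) (hxy : x ≠ y) : G.Adj x y := by
  classical
  by_contra hnadj
  set Sc : Set V := ((↑S : Set V)ᶜ) with hSc
  set A : Set V := {v | ReachIn G Sc a v} with hA
  set B : Set V := {v | ReachIn G Sc b v} with hB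
  have hAmem : ∀ {v}, v ∈ A → ReachIn G Sc a v := fun hv => hv
  have hBmem : ∀ {v}, v ∈ B → ReachIn G Sc b v := fun hv => hv
  have hAS : ∀ v ∈ A, v ∉ S := fun v hv hvS => (hAmem hv).mem_right hvS
  have hBS : ∀ v ∈ B, v ∉ S := fun v hv hvS => (hBmem hv).mem_right hvS
  have hxA : x ∉ A := fun h => hAS x h hx
  have hyA : y ∉ A := fun h => hAS y h hy
  have hxB : x ∉ B := fun h => hBS x h hx
  have hyB : y ∉ B := fun h => hBS y h hy
  have hAB : ∀ v, v ∈ A → v ∈ B → False := fun v hvA hvB =>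
    hsep.2.2 ((hAmem hvA).trans (hBmem hvB).symm)
  have hABadj : ∀ u v, u ∈ A → v ∈ B → ¬ G.Adj u v := by
    intro u v hu hv hadj
    exact hsep.2.2 (((hAmem hu).trans
      (ReachIn.adj hadj (hAmem hu).mem_right (hBmem hv).mem_right)).trans (hBmem hv).symm)
  -- walks within A/B
  have hreachA : ∀ u, u ∈ A → ReachIn G A a u := by
    intro u hu
    obtain ⟨w, hw⟩ := hAmem hu
    exact ⟨w, fun v hv => ReachIn.of_mem_support ⟨w, hw⟩ w hw hv⟩
  have hreachB : ∀ u, u ∈ B → ReachIn G B b u := by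
    intro u hu
    obtain ⟨w, hw⟩ := hBmem hu
    exact ⟨w, fun v hv => ReachIn.of_mem_support ⟨w, hw⟩ w hw hv⟩
  -- neighbors of x and y in A and B
  have hminb : ∀ s ∈ S, ¬ Sep G b a (S.erase s) := fun s hs h => hmin s hs h.symm
  obtain ⟨ux, hux_adj, hux⟩ := exists_neighbor_in_component hsep hmin hx
  obtain ⟨uy, huy_adj, huy⟩ := exists_neighbor_in_component hsep hmin hy
  obtain ⟨vx, hvx_adj, hvx⟩ := exists_neighbor_in_component hsep.symm hminb hx
  obtain ⟨vy, hvy_adj, hvy⟩ := exists_neighbor_in_component hsep.symm hminb hy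
  have huxA : ux ∈ A := hux
  have huyA : uy ∈ A := huy
  have hvxB : vx ∈ B := hvx
  have hvyB : vy ∈ B := hvy
  -- a walk from x to y through A
  have hxmem : x ∈ A ∪ {x, y} := Or.inr (by simp)
  have hymem : y ∈ A ∪ {x, y} := Or.inr (by simp)
  have hxmemB : x ∈ B ∪ {x, y} := Or.inr (by simp)
  have hymemB : y ∈ B ∪ {x, y} := Or.inr (by simp)
  have hWA : ReachIn G (A ∪ {x, y}) x y :=
    ((ReachIn.adj hux_adj hxmem (Or.inl huxA)).trans
      (((hreachA ux huxA).symm.trans (hreachA uy huyA)).mono Set.subset_union_left)).trans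
      (ReachIn.adj huy_adj.symm (Or.inl huyA) hymem)
  have hWB : ReachIn G (B ∪ {x, y}) y x :=
    ((ReachIn.adj hvy_adj hymemB (Or.inl hvyB)).trans
      (((hreachB vy hvyB).symm.trans (hreachB vx hvxB)).mono Set.subset_union_left)).trans
      (ReachIn.adj hvx_adj.symm (Or.inl hvxB) hxmemB)
  -- minimal length walks
  let PX : ℕ → Prop := fun n => ∃ w : G.Walk x y, w.length = n ∧ ∀ v ∈ w.support, v ∈ A ∪ {x, y}
  let PY : ℕ → Prop := fun n => ∃ w : G.Walk y x, w.length = n ∧ ∀ v ∈ w.support, v ∈ B ∪ {x, y}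
  have hPX : ∃ n, PX n := by obtain ⟨w, hw⟩ := hWA; exact ⟨w.length, w, rfl, hw⟩
  have hPY : ∃ n, PY n := by obtain ⟨w, hw⟩ := hWB; exact ⟨w.length, w, rfl, hw⟩
  set p := Nat.find hPX with hpdef
  set q := Nat.find hPY with hqdef
  obtain ⟨W1, hW1len, hW1sup⟩ := Nat.find_spec hPX
  obtain ⟨W2, hW2len, hW2sup⟩ := Nat.find_spec hPY
  set P1 := W1.bypass with hP1def
  set P2 := W2.bypass with hP2def
  have hP1path : P1.IsPath := W1.bypass_isPath
  have hP2path : P2.IsPath := W2.bypass_isPath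
  have hP1sup : ∀ v ∈ P1.support, v ∈ A ∪ {x, y} :=
    fun v hv => hW1sup v (W1.support_bypass_subset hv)
  have hP2sup : ∀ v ∈ P2.support, v ∈ B ∪ {x, y} :=
    fun v hv => hW2sup v (W2.support_bypass_subset hv)
  have hP1len : P1.length = p :=
    le_antisymm (by rw [hpdef, ← hW1len]; exact W1.length_bypass_le) (Nat.find_min' hPX ⟨P1, rfl, hP1sup⟩)
  have hP2len : P2.length = q :=
    le_antisymm (by rw [hqdef, ← hW2len]; exact W2.length_bypass_le) (Nat.find_min' hPY ⟨P2, rfl, hP2sup⟩)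
  have hshortA : ∀ m, m < p → ¬ PX m := fun m hm => Nat.find_min hPX hm
  have hshortB : ∀ m, m < q → ¬ PY m := fun m hm => Nat.find_min hPY hm
  -- p, q ≥ 2
  have hp2 : 2 ≤ p := by
    by_contra hcon
    push_neg at hcon
    interval_cases p
    · exact hxy (by
        have := P1.getVert_of_length_le (i := 0) (by omega)
        simpa using this)
    · refine hnadj ?_
      have h1 := P1.adj_getVert_succ (i := 0) (by omega)
      have h2 := P1.getVert_of_length_le (i := 1) (by omega)
      rw [Walk.getVert_zero, h2] at h1
      exact h1
  have hq2 : 2 ≤ q := by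
    by_contra hcon
    push_neg at hcon
    interval_cases q
    · have h0 : y = x := by
        have := P2.getVert_of_length_le (i := 0) (by omega)
        simpa using this
      exact hxy h0.symm
    · refine hnadj (G.adj_symm ?_)
      have h1 := P2.adj_getVert_succ (i := 0) (by omega)
      have h2 := P2.getVert_of_length_le (i := 1) (by omega)
      rw [Walk.getVert_zero, h2] at h1
      exact h1
  -- interior vertices
  have hIntA : ∀ t, 0 < t → t < p → P1.getVert t ∈ A := by
    intro t ht0 htp
    have hmem : P1.getVert t ∈ P1.support :=
      Walk.mem_support_iff_exists_getVert.mpr ⟨t, rfl, by omega⟩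
    rcases hP1sup _ hmem with h | h
    · exact h
    · exfalso
      rcases h with h | h
    -- h : getVert t = x or = y
      · exact IsPath.getVert_injOn' hP1path (i := t) (j := 0) (by omega) (by omega)
          (by omega) (by simpa using h)
      · exact IsPath.getVert_injOn' hP1path (i := t) (j := P1.length) (by omega) le_rfl
          (by omega) (by rw [Walk.getVert_length]; simpa using h)
  have hIntB : ∀ t, 0 < t → t < q → P2.getVert t ∈ B := by
    intro t ht0 htp
    have hmem : P2.getVert t ∈ P2.support :=
      Walk.mem_support_iff_exists_getVert.mpr ⟨t, rfl, by omega⟩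
    rcases hP2sup _ hmem with h | h
    · exact h
    · exfalso
      rcases h with h | h
      · exact IsPath.getVert_injOn' hP2path (i := t) (j := P2.length) (by omega) le_rfl
          (by omega) (by rw [Walk.getVert_length]; simpa using h)
      · exact IsPath.getVert_injOn' hP2path (i := t) (j := 0) (by omega) (by omega)
          (by omega) (by simpa using h)
  -- the cycle
  set C := P1.append P2 with hCdef
  have hClen : C.length = p + q := by
    rw [hCdef, Walk.length_append, hP1len, hP2len]
  have hCV : ∀ t, C.getVert t = if t < p then P1.getVert t else P2.getVert (t - p) := by
    intro t
    rw [hCdef, Walk.getVert_append, hP1len]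
  have hsupcap : ∀ v, v ∈ P1.support → v ∈ P2.support → v = x ∨ v = y := by
    intro v h1 h2
    rcases hP1sup v h1 with h | h
    · rcases hP2sup v h2 with h' | h'
      · exact absurd (hAB v h h') not_false
      · simpa using h'
    · simpa using h
  have hCcyc : C.IsCycle := by
    rw [Walk.isCycle_def]
    refine ⟨⟨?_⟩, ?_, ?_⟩
    · -- edges nodup
      rw [hCdef, Walk.edges_append]
      rw [List.nodup_append]
      refine ⟨hP1path.isTrail.edges_nodup, hP2path.isTrail.edges_nodup, ?_⟩
      intro e he1 e' he2 hee'
      subst hee'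
      induction e with
      | h c d =>
        have hc1 := Walk.fst_mem_support_of_mem_edges _ he1
        have hd1 := Walk.snd_mem_support_of_mem_edges _ he1
        have hc2 := Walk.fst_mem_support_of_mem_edges _ he2
        have hd2 := Walk.snd_mem_support_of_mem_edges _ he2
        have hcadj : G.Adj c d := P1.edges_subset_edgeSet he1
        rcases hsupcap c hc1 hc2 with rfl | rfl <;> rcases hsupcap d hd1 hd2 with rfl | rfl
        · exact G.irrefl hcadj
        · exact hnadj hcadj
        · exact hnadj hcadj.symm
        · exact G.irrefl hcadj
    · intro h
      have := hClen
      rw [h] at this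
      simp at this
      omega
    · have htl : C.support.tail = P1.support.tail ++ P2.support.tail := by
        rw [hCdef, Walk.support_append, List.tail_append_of_ne_nil (Walk.support_ne_nil _)]
      rw [htl, List.nodup_append]
      refine ⟨hP1path.support_nodup.tail, hP2path.support_nodup.tail, ?_⟩
      intro v hv1 v' hv2 hvv'
      subst hvv'
      have h1 : v ∈ P1.support := List.mem_of_mem_tail hv1
      have h2 : v ∈ P2.support := List.mem_of_mem_tail hv2
      rcases hsupcap v h1 h2 with rfl | rfl
      · have := hP1path.support_nodup
        rw [P1.support_eq_cons] at this
        exact this.notMem hv1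
      · have := hP2path.support_nodup
        rw [P2.support_eq_cons] at this
        exact this.notMem hv2
  obtain ⟨i, j, hij, hjlt, hexcl, hadj⟩ := hch C hCcyc (by omega)
  rw [hClen] at hjlt hexcl
  rcases lt_or_ge i p with hiP | hiP
  · rcases le_or_gt j p with hjP | hjP
    · -- chord within P1
      have hadj' : G.Adj (P1.getVert i) (P1.getVert j) := by
        have hvi : C.getVert i = P1.getVert i := by rw [hCV]; exact if_pos hiP
        have hvj : C.getVert j = P1.getVert j := by
          rcases Nat.lt_or_ge j p with h | h
          · rw [hCV]; exact if_pos h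
          · have hjp : j = p := le_antisymm hjP h
            subst hjp
            rw [hCV]
            simp only [lt_irrefl, if_false, Nat.sub_self]
            rw [Walk.getVert_zero, ← hP1len, Walk.getVert_length]
        rwa [hvi, hvj] at hadj
      obtain ⟨w', hw'len, hw'sup⟩ := exists_shortcut P1 (by omega) (by omega) hadj'
      exact hshortA (i + 1 + (p - j)) (by omega)
        ⟨w', by rw [hw'len, hP1len], fun v hv => hP1sup v (hw'sup hv)⟩
    · rcases Nat.eq_zero_or_pos i with rfl | hi0
      · -- i = 0 : chord from x into P2
        have hj1 : j + 1 ≠ p + q := fun h => hexcl ⟨rfl, h⟩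
        have hadj' : G.Adj x (P2.getVert (j - p)) := by
          have hvi : C.getVert 0 = x := Walk.getVert_zero _
          have hvj : C.getVert j = P2.getVert (j - p) := by
            rw [hCV]; exact if_neg (by omega)
          rwa [hvi, hvj] at hadj
        obtain ⟨t1, ht1len, ht1sup⟩ := exists_take P2 (j - p) (by omega)
        refine hshortB (j - p + 1) (by omega) ⟨t1.append (Walk.cons hadj'.symm Walk.nil), by
          rw [Walk.length_append]; simp [ht1len], ?_⟩
        intro v hv
        rw [Walk.mem_support_append_iff] at hv
        rcases hv with hv | hv
        · exact hP2sup v (ht1sup hv)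
        · simp only [Walk.support_cons, Walk.support_nil, List.mem_cons,
            List.not_mem_nil, or_false] at hv
          rcases hv with rfl | rfl
          · exact hP2sup _ (ht1sup t1.end_mem_support)
          · exact Or.inr (by simp)
      · -- 0 < i < p < j : edge between A and B, impossible
        have hu : C.getVert i ∈ A := by
          rw [hCV, if_pos hiP]; exact hIntA i hi0 hiP
        have hv : C.getVert j ∈ B := by
          rw [hCV, if_neg (by omega)]; exact hIntB (j - p) (by omega) (by omega)
        exact hABadj _ _ hu hv hadj
  · -- chord within P2
    have hadj' : G.Adj (P2.getVert (i - p)) (P2.getVert (j - p)) := by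
      have hvi : C.getVert i = P2.getVert (i - p) := by rw [hCV]; exact if_neg (by omega)
      have hvj : C.getVert j = P2.getVert (j - p) := by rw [hCV]; exact if_neg (by omega)
      rwa [hvi, hvj] at hadj
    obtain ⟨w', hw'len, hw'sup⟩ := exists_shortcut P2 (by omega) (by omega) hadj'
    exact hshortB (i - p + 1 + (q - (j - p))) (by omega)
      ⟨w', by rw [hw'len, hP2len], fun v hv => hP2sup v (hw'sup hv)⟩

def Simplicial (G : SimpleGraph V) (v : V) : Prop :=
  ∀ ⦃u w : V⦄, G.Adj v u → G.Adj v w → u ≠ w → G.Adj u w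

lemma Simplicial.of_induce {T : Set V} {v : V} (hv : v ∈ T)
    (hnbr : ∀ u, G.Adj v u → u ∈ T)
    (hsimp : Simplicial (G.induce T) ⟨v, hv⟩) : Simplicial G v := by
  intro u w hu hw huw
  have hu' : u ∈ T := hnbr u hu
  have hw' : w ∈ T := hnbr w hw
  have : (G.induce T).Adj ⟨u, hu'⟩ ⟨w, hw'⟩ :=
    hsimp (u := ⟨u, hu'⟩) (w := ⟨w, hw'⟩) (by simpa using hu) (by simpa using hw)
      (by simpa using huw)
  simpa using this

universe u

theorem dirac_two (n : ℕ) : ∀ {V : Type u} [Fintype V] [DecidableEq V] (G : SimpleGraph V),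
    Fintype.card V ≤ n → IsChordal G → ∀ a b : V, a ≠ b → ¬ G.Adj a b →
      ∃ u v : V, u ≠ v ∧ ¬ G.Adj u v ∧ Simplicial G u ∧ Simplicial G v := by
  induction n with
  | zero =>
    intro V _ _ G hcard _ a _ _ _
    have : 0 < Fintype.card V := Fintype.card_pos_iff.mpr ⟨a⟩
    omega
  | succ n IH =>
    intro V _ _ G hcard hch a b hab hnadj
    classical
    obtain ⟨S, hsep, hmin⟩ := exists_min_sep (G := G) hab hnadj
    have hminb : ∀ s ∈ S, ¬ Sep G b a (S.erase s) := fun s hs h => hmin s hs h.symm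
    have hclique : ∀ x ∈ S, ∀ y ∈ S, x ≠ y → G.Adj x y :=
      fun x hx y hy hxy => sep_isClique hch hsep hmin hx hy hxy
    -- generic side construction
    have main : ∀ (c e : V), Sep G c e S → (∀ s ∈ S, ¬ Sep G c e (S.erase s)) →
        ∃ u, ReachIn G ((↑S : Set V)ᶜ) c u ∧ Simplicial G u := by
      intro c e hsepc hminc
      set A : Set V := {v | ReachIn G ((↑S : Set V)ᶜ) c v} with hA
      set T : Set V := A ∪ ↑S with hT
      have hcA : c ∈ A := ReachIn.refl (by simpa using hsepc.1)
      have heA : e ∉ A := fun h => hsepc.2.2 h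
      have heT : e ∉ T := by
        intro h
        rcases h with h | h
        · exact heA h
        · exact hsepc.2.1 (by simpa using h)
      have hTcard : Fintype.card ↥T ≤ n := by
        have h1 : Fintype.card ↥T < Fintype.card V :=
          Fintype.card_lt_of_injective_of_notMem (Subtype.val : ↥T → V)
            Subtype.val_injective (b := e) (by rwa [Subtype.range_coe])
        omega
      have hclosure : ∀ u, u ∈ A → ∀ w, G.Adj u w → w ∈ T := by
        intro u hu w hadj
        by_cases hwS : w ∈ S
        · exact Or.inr (by simpa using hwS)
        · exact Or.inl ((hu : ReachIn G _ c u).trans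
            (ReachIn.adj hadj (hu : ReachIn G _ c u).mem_right (by simpa using hwS)))
      have hchT : IsChordal (G.induce T) := IsChordal.induce hch T
      by_cases hcomp : ∀ z w : ↥T, z ≠ w → (G.induce T).Adj z w
      · refine ⟨c, hcA, Simplicial.of_induce (Or.inl hcA) (hclosure c hcA) ?_⟩
        intro z w hz hw hzw
        exact hcomp z w hzw
      · push_neg at hcomp
        obtain ⟨z0, w0, hz0w0, hnadj0⟩ := hcomp
        obtain ⟨z, w, hzw, hznadj, hzsimp, hwsimp⟩ :=
          IH (G.induce T) hTcard hchT z0 w0 hz0w0 hnadj0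
        have hnotboth : (z : V) ∈ A ∨ (w : V) ∈ A := by
          by_contra hcon
          push_neg at hcon
          have hzS : (z : V) ∈ S := by
            rcases z.2 with h | h
            · exact absurd h hcon.1
            · simpa using h
          have hwS : (w : V) ∈ S := by
            rcases w.2 with h | h
            · exact absurd h hcon.2
            · simpa using h
          have : G.Adj (z : V) (w : V) :=
            hclique _ hzS _ hwS (fun h => hzw (Subtype.ext h))
          exact hznadj (by simpa using this)
        rcases hnotboth with h | h
        · exact ⟨z, h, Simplicial.of_induce (Or.inl h)
            (fun u hu => hclosure _ h u hu) (by simpa using hzsimp)⟩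
        · exact ⟨w, h, Simplicial.of_induce (Or.inl h)
            (fun u hu => hclosure _ h u hu) (by simpa using hwsimp)⟩
    obtain ⟨u, huA, husimp⟩ := main a b hsep hmin
    obtain ⟨v, hvB, hvsimp⟩ := main b a hsep.symm hminb
    have huv : ¬ G.Adj u v := by
      intro hadj
      exact hsep.2.2 ((huA.trans (ReachIn.adj hadj huA.mem_right hvB.mem_right)).trans hvB.symm)
    have hne : u ≠ v := by
      rintro rfl
      exact hsep.2.2 (huA.trans hvB.symm)
    exact ⟨u, v, hne, huv, husimp, hvsimp⟩

lemma exists_simplicial {V : Type u} [Fintype V] [DecidableEq V] [Nonempty V]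
    {G : SimpleGraph V} (hch : IsChordal G) : ∃ v, Simplicial G v := by
  by_cases hcomp : ∀ z w : V, z ≠ w → G.Adj z w
  · exact ⟨Classical.arbitrary V, fun z w hz hw hzw => hcomp z w hzw⟩
  · push_neg at hcomp
    obtain ⟨a, b, hab, hnadj⟩ := hcomp
    obtain ⟨z, _, _, _, hz, _⟩ := dirac_two (Fintype.card V) G le_rfl hch a b hab hnadj
    exact ⟨z, hz⟩
theorem peo_of_chordal (n : ℕ) : ∀ {V : Type u} [Fintype V] [DecidableEq V] (G : SimpleGraph V),
    Fintype.card V = n → IsChordal G →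
    ∃ σ : Fin n ≃ V, ∀ i j k : Fin n, i < j → j < k →
      G.Adj (σ i) (σ j) → G.Adj (σ i) (σ k) → G.Adj (σ j) (σ k) := by
  induction n with
  | zero =>
    intro V _ _ G hcard _
    haveI : IsEmpty V := Fintype.card_eq_zero_iff.mp hcard
    exact ⟨Equiv.equivOfIsEmpty (Fin 0) V, fun i => i.elim0⟩
  | succ n IH =>
    intro V _ _ G hcard hch
    haveI : Nonempty V := Fintype.card_pos_iff.mp (by omega)
    obtain ⟨v, hv⟩ := exists_simplicial (G := G) hch
    set T : Set V := {u | u ≠ v} with hT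
    have hTcard : Fintype.card ↥T = n := by
      have h1 : Fintype.card ↥T = Fintype.card V - Fintype.card {u // u = v} :=
        Fintype.card_subtype_compl _
      rw [Fintype.card_subtype_eq] at h1
      omega
    obtain ⟨τ, hτ⟩ := IH (G.induce T) hTcard (IsChordal.induce hch T)
    let f : Fin (n + 1) → V := fun i => if h : i = 0 then v else (τ (i.pred h) : V)
    have hfv : ∀ (i : Fin (n + 1)) (h : ¬ i = 0), f i = (τ (i.pred h) : V) := by
      intro i h
      simp only [f, dif_neg h]
    have hf0 : f 0 = v := by simp [f]
    have hne_v : ∀ (i : Fin (n + 1)) (h : ¬ i = 0), f i ≠ v := by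
      intro i h
      rw [hfv i h]
      exact (τ (i.pred h)).2
    have hinj : Function.Injective f := by
      intro i j hij
      by_cases hi : i = 0 <;> by_cases hj : j = 0
      · rw [hi, hj]
      · exact absurd (by rw [← hij, hi, hf0]) (hne_v j hj).symm
      · exact absurd (by rw [hij, hj, hf0]) (hne_v i hi).symm
      · rw [hfv i hi, hfv j hj] at hij
        have := τ.injective (Subtype.ext hij)
        rwa [Fin.pred_inj] at this
    have hbij : Function.Bijective f :=
      (Fintype.bijective_iff_injective_and_card f).mpr ⟨hinj, by simp [hcard]⟩
    refine ⟨Equiv.ofBijective f hbij, ?_⟩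
    intro i j k hij hjk hadj1 hadj2
    simp only [Equiv.ofBijective_apply] at hadj1 hadj2 ⊢
    have hij' : i.val < j.val := hij
    have hjk' : j.val < k.val := hjk
    have hj : ¬ j = 0 := fun h => by rw [h] at hij'; simp at hij'
    have hk : ¬ k = 0 := fun h => by rw [h] at hjk'; simp at hjk'
    by_cases hi : i = 0
    · rw [hi, hf0] at hadj1 hadj2
      exact hv hadj1 hadj2 (fun h => hjk.ne (hinj h))
    · have hi0 : i.val ≠ 0 := fun h => hi (Fin.ext (by simpa using h))
      rw [hfv i hi, hfv j hj] at hadj1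
      rw [hfv i hi, hfv k hk] at hadj2
      have hadj1' : (G.induce T).Adj (τ (i.pred hi)) (τ (j.pred hj)) := hadj1
      have hadj2' : (G.induce T).Adj (τ (i.pred hi)) (τ (k.pred hk)) := hadj2
      have hord1 : i.pred hi < j.pred hj := by
        rw [Fin.lt_def]
        simp only [Fin.coe_pred]
        omega
      have hord2 : j.pred hj < k.pred hk := by
        rw [Fin.lt_def]
        simp only [Fin.coe_pred]
        omega
      have hres := hτ _ _ _ hord1 hord2 hadj1' hadj2'
      rw [hfv j hj, hfv k hk]
      exact hres

theorem chordal_of_peo {V : Type u} [Fintype V] (G : SimpleGraph V)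
    (σ : Fin (Fintype.card V) ≃ V)
    (hσ : ∀ i j k : Fin (Fintype.card V), i < j → j < k →
      G.Adj (σ i) (σ j) → G.Adj (σ i) (σ k) → G.Adj (σ j) (σ k)) :
    IsChordal G := by
  intro v w hw hlen
  set m := w.length with hm
  have hne : (Finset.range m).Nonempty := ⟨0, by simp; omega⟩
  obtain ⟨t, ht, hminle⟩ := Finset.exists_min_image (Finset.range m)
    (fun s => σ.symm (w.getVert s)) hne
  rw [Finset.mem_range] at ht
  have hadjs : ∀ s, s < m → G.Adj (w.getVert s) (w.getVert (s + 1)) :=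
    fun s hs => w.adj_getVert_succ hs
  have hgv_ne : ∀ {s s' : ℕ}, s < s' → s' < m → w.getVert s ≠ w.getVert s' :=
    fun hss' hs' => IsCycle.getVert_injOn' hw hss' hs'
  have key : ∀ s1 s2, s1 < m → s2 < m → s1 ≠ s2 →
      G.Adj (w.getVert t) (w.getVert s1) → G.Adj (w.getVert t) (w.getVert s2) →
      G.Adj (w.getVert s1) (w.getVert s2) := by
    intro s1 s2 h1 h2 h12 ha1 ha2
    have hlt1 : σ.symm (w.getVert t) < σ.symm (w.getVert s1) := by
      refine lt_of_le_of_ne (hminle s1 (Finset.mem_range.mpr h1)) (fun h => ?_)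
      have : w.getVert t = w.getVert s1 := by
        have := congrArg σ h
        simpa using this
      exact G.irrefl (this ▸ ha1)
    have hlt2 : σ.symm (w.getVert t) < σ.symm (w.getVert s2) := by
      refine lt_of_le_of_ne (hminle s2 (Finset.mem_range.mpr h2)) (fun h => ?_)
      have : w.getVert t = w.getVert s2 := by
        have := congrArg σ h
        simpa using this
      exact G.irrefl (this ▸ ha2)
    have hne12 : σ.symm (w.getVert s1) ≠ σ.symm (w.getVert s2) := by
      intro h
      have heq : w.getVert s1 = w.getVert s2 := by
        have := congrArg σ h
        simpa using this
      rcases lt_or_gt_of_ne h12 with hlt | hgt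
      · exact hgv_ne hlt h2 heq
      · exact hgv_ne hgt h1 heq.symm
    rcases lt_or_gt_of_ne hne12 with hlt | hgt
    · have := hσ _ _ _ hlt1 hlt (by simpa using ha1) (by simpa using ha2)
      simpa using this
    · have := hσ _ _ _ hlt2 hgt (by simpa using ha2) (by simpa using ha1)
      have := this.symm
      simpa using this
  have hadj_wrap : G.Adj (w.getVert 0) (w.getVert (m - 1)) := by
    have h1 : G.Adj (w.getVert (m - 1)) (w.getVert m) := by
      have := hadjs (m - 1) (by omega)
      have heq : m - 1 + 1 = m := by omega
      rwa [heq] at this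
    have h2 : w.getVert m = w.getVert 0 := by
      rw [hm, Walk.getVert_length, Walk.getVert_zero]
    rw [h2] at h1
    exact h1.symm
  by_cases ht0 : t = 0
  · subst ht0
    refine ⟨1, m - 1, by omega, by omega, by omega, ?_⟩
    exact key 1 (m - 1) (by omega) (by omega) (by omega)
      (by simpa using hadjs 0 (by omega)) hadj_wrap
  · by_cases htl : t = m - 1
    · refine ⟨0, m - 2, by omega, by omega, by omega, ?_⟩
      refine (key (m - 2) 0 (by omega) (by omega) (by omega) ?_ ?_).symm
      · have := (hadjs (m - 2) (by omega)).symm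
        have heq : m - 2 + 1 = m - 1 := by omega
        rw [heq] at this
        rw [htl]
        exact this
      · rw [htl]
        exact hadj_wrap.symm
    · refine ⟨t - 1, t + 1, by omega, by omega, by omega, ?_⟩
      refine key (t - 1) (t + 1) (by omega) (by omega) (by omega) ?_ ?_
      · have := (hadjs (t - 1) (by omega)).symm
        have heq : t - 1 + 1 = t := by omega
        rwa [heq] at this
      · exact hadjs t (by omega)
end ChordalAux


/-- A finite graph is chordal if and only if it has a perfect elimination ordering: an
ordering `v₁ ≺ ⋯ ≺ vₙ` of the vertices such that for `i < j < k`, if `vᵢ` is adjacent to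
both `vⱼ` and `vₖ` then `vⱼ` is adjacent to `vₖ`. -/
theorem isChordal_iff_perfect_elimination_ordering
    {V : Type*} [Fintype V] (Γ : SimpleGraph V) :
    IsChordal Γ ↔
      ∃ σ : Fin (Fintype.card V) ≃ V,
        ∀ i j k : Fin (Fintype.card V), i < j → j < k →
          Γ.Adj (σ i) (σ j) → Γ.Adj (σ i) (σ k) → Γ.Adj (σ j) (σ k) := by
  classical
  constructor
  · intro hch
    exact ChordalAux.peo_of_chordal (Fintype.card V) Γ rfl hch
  · rintro ⟨σ, hσ⟩
    exact ChordalAux.chordal_of_peo Γ σ hσ
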